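/- (Characterization C4 of GLS.) A formula φ is a theorem of the Hilbert system GLS if and only if for every GL-model ⟨W,R,V⟩ and every infinitely descending sequence w₁ R⁻¹ w₂ R⁻¹ w₃ ⋯ in W there is a number i such that V(w_i, φ) = true. -/

import Mathlib

/-- Modal formulas: propositional variables, ⊥, →, □. -/
inductive Formula : Type
  | var : ℕ → Formula
  | bot : Formula
  | imp : Formula → Formula → Formula
  | box : Formula → Formula
deriving DecidableEq

/-- Levels of sequents in GLS_seq: first level (⇒) and second level (⇛). -/
inductive SeqLevel : Type
  | one
  | two
deriving DecidableEq

/-- The set of subformulas of a formula. -/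
def Formula.subf : Formula → Finset Formula
  | .var p => {.var p}
  | .bot => {.bot}
  | .imp φ ψ => insert (.imp φ ψ) (φ.subf ∪ ψ.subf)
  | .box φ => insert (.box φ) φ.subf

/-- SF(Ψ,Φ): all subformulas of formulas in Ψ ∪ Φ. -/
def SF (Ψ Φ : Finset Formula) : Finset Formula := (Ψ ∪ Φ).biUnion Formula.subf

def Formula.isBox : Formula → Bool
  | .box _ => true
  | _ => false

def Formula.unbox : Formula → Formula
  | .box φ => φ
  | φ => φ

/-- Θ_□ = {φ : □φ ∈ Θ}. -/
def boxInv (Θ : Finset Formula) : Finset Formula :=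
  (Θ.filter fun ψ => ψ.isBox).image Formula.unbox

/-- The sequent calculus GLS_seq, on sequents of two levels.  The Bool parameter
records whether the cut rule may be used: `GLSSeq true` is provability in GLS_seq,
`GLSSeq false` is cut-free provability.  The first-level fragment is exactly GL_seq. -/
inductive GLSSeq : Bool → SeqLevel → Finset Formula → Finset Formula → Prop
  | init (c lv φ) : GLSSeq c lv {φ} {φ}
  | initBot (c lv) : GLSSeq c lv {Formula.bot} ∅
  | cut {lv Γ Δ} (φ) : GLSSeq true lv Γ (insert φ Δ) → GLSSeq true lv (insert φ Γ) Δ →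
      GLSSeq true lv Γ Δ
  | weak {c lv Γ Δ Γ' Δ'} : Γ ⊆ Γ' → Δ ⊆ Δ' → GLSSeq c lv Γ Δ → GLSSeq c lv Γ' Δ'
  | impL {c lv Γ Δ φ ψ} : GLSSeq c lv Γ (insert φ Δ) → GLSSeq c lv (insert ψ Γ) Δ →
      GLSSeq c lv (insert (.imp φ ψ) Γ) Δ
  | impR {c lv Γ Δ φ ψ} : GLSSeq c lv (insert φ Γ) (insert ψ Δ) →
      GLSSeq c lv Γ (insert (.imp φ ψ) Δ)
  | boxGL {c Γ φ} : GLSSeq c .one (Γ ∪ Γ.image .box ∪ {.box φ}) {φ} →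
      GLSSeq c .one (Γ.image .box) {.box φ}
  | boxL {c Γ Δ} (φ) : GLSSeq c .two (insert φ Γ) Δ → GLSSeq c .two (insert (.box φ) Γ) Δ
  | lift {c Γ Δ} : GLSSeq c .one Γ Δ → GLSSeq c .two Γ Δ

/-- The sequent calculus GL_seq (on first-level sequents only). -/
inductive GLSeq : Bool → Finset Formula → Finset Formula → Prop
  | init (c φ) : GLSeq c {φ} {φ}
  | initBot (c) : GLSeq c {Formula.bot} ∅
  | cut {Γ Δ} (φ) : GLSeq true Γ (insert φ Δ) → GLSeq true (insert φ Γ) Δ → GLSeq true Γ Δ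
  | weak {c Γ Δ Γ' Δ'} : Γ ⊆ Γ' → Δ ⊆ Δ' → GLSeq c Γ Δ → GLSeq c Γ' Δ'
  | impL {c Γ Δ φ ψ} : GLSeq c Γ (insert φ Δ) → GLSeq c (insert ψ Γ) Δ →
      GLSeq c (insert (.imp φ ψ) Γ) Δ
  | impR {c Γ Δ φ ψ} : GLSeq c (insert φ Γ) (insert ψ Δ) → GLSeq c Γ (insert (.imp φ ψ) Δ)
  | boxGL {c Γ φ} : GLSeq c (Γ ∪ Γ.image .box ∪ {.box φ}) {φ} → GLSeq c (Γ.image .box) {.box φ}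

/-- Proof trees of GLS_seq (cut included). -/
inductive GLSTree : SeqLevel → Finset Formula → Finset Formula → Type
  | init (lv φ) : GLSTree lv {φ} {φ}
  | initBot (lv) : GLSTree lv {Formula.bot} ∅
  | cut {lv Γ Δ} (φ) : GLSTree lv Γ (insert φ Δ) → GLSTree lv (insert φ Γ) Δ → GLSTree lv Γ Δ
  | weak {lv Γ Δ} (Γ' Δ' : Finset Formula) : Γ ⊆ Γ' → Δ ⊆ Δ' → GLSTree lv Γ Δ → GLSTree lv Γ' Δ'
  | impL {lv Γ Δ} (φ ψ) : GLSTree lv Γ (insert φ Δ) → GLSTree lv (insert ψ Γ) Δ →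
      GLSTree lv (insert (.imp φ ψ) Γ) Δ
  | impR {lv Γ Δ} (φ ψ) : GLSTree lv (insert φ Γ) (insert ψ Δ) → GLSTree lv Γ (insert (.imp φ ψ) Δ)
  | boxGL (Γ φ) : GLSTree .one (Γ ∪ Γ.image .box ∪ {.box φ}) {φ} → GLSTree .one (Γ.image .box) {.box φ}
  | boxL {Γ Δ} (φ) : GLSTree .two (insert φ Γ) Δ → GLSTree .two (insert (.box φ) Γ) Δ
  | lift {Γ Δ} : GLSTree .one Γ Δ → GLSTree .two Γ Δ

/-- The set of principal formulas of all (□L) rules occurring in a proof tree. -/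
def GLSTree.principals : ∀ {lv Γ Δ}, GLSTree lv Γ Δ → Finset Formula
  | _, _, _, .init _ _ => ∅
  | _, _, _, .initBot _ => ∅
  | _, _, _, .cut _ t₁ t₂ => t₁.principals ∪ t₂.principals
  | _, _, _, .weak _ _ _ _ t => t.principals
  | _, _, _, .impL _ _ t₁ t₂ => t₁.principals ∪ t₂.principals
  | _, _, _, .impR _ _ t => t.principals
  | _, _, _, .boxGL _ _ t => t.principals
  | _, _, _, .boxL φ t => insert (Formula.box φ) t.principals
  | _, _, _, .lift t => t.principals

/-- A proof tree bundled with its level and conclusion. -/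
abbrev PGLSTree : Type :=
  (lv : SeqLevel) × (Γ : Finset Formula) × (Δ : Finset Formula) × GLSTree lv Γ Δ

/-- The set of subproofs of a proof tree (including the tree itself). -/
def GLSTree.subproofs {lv Γ Δ} (t : GLSTree lv Γ Δ) : Set PGLSTree :=
  insert ⟨lv, Γ, Δ, t⟩ <|
    match lv, Γ, Δ, t with
    | _, _, _, .init _ _ => ∅
    | _, _, _, .initBot _ => ∅
    | _, _, _, .cut _ t₁ t₂ => t₁.subproofs ∪ t₂.subproofs
    | _, _, _, .weak _ _ _ _ t₁ => t₁.subproofs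
    | _, _, _, .impL _ _ t₁ t₂ => t₁.subproofs ∪ t₂.subproofs
    | _, _, _, .impR _ _ t₁ => t₁.subproofs
    | _, _, _, .boxGL _ _ t₁ => t₁.subproofs
    | _, _, _, .boxL _ t₁ => t₁.subproofs
    | _, _, _, .lift t₁ => t₁.subproofs

/-- Kripke satisfaction over a frame `R` with atomic valuation `v`. -/
def KSat {W : Type} (R : W → W → Prop) (v : W → ℕ → Prop) : Formula → W → Prop
  | .var p, w => v w p
  | .bot, _ => False
  | .imp φ ψ, w => KSat R v φ w → KSat R v ψ w
  | .box φ, w => ∀ w', R w w' → KSat R v φ w'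

/-- A GL-model: a nonempty, transitive, converse well-founded Kripke model. -/
structure GLModel where
  World : Type
  ne : Nonempty World
  R : World → World → Prop
  trans : Transitive R
  cwf : ∀ f : ℕ → World, ¬ ∀ i, R (f i) (f (i + 1))
  val : World → ℕ → Prop

/-- Truth of a formula at a world of a GL-model. -/
def GLModel.sat (M : GLModel) (w : M.World) (φ : Formula) : Prop := KSat M.R M.val φ w

/-- Truth of a sequent Γ ▸ Δ at a world: some γ ∈ Γ is false or some δ ∈ Δ is true. -/
def GLModel.seqTrue (M : GLModel) (w : M.World) (Γ Δ : Finset Formula) : Prop :=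
  (∃ γ ∈ Γ, ¬ M.sat w γ) ∨ (∃ δ ∈ Δ, M.sat w δ)

/-- w is Σ-reflexive: □α → α is true at w for every □α ∈ Σ. -/
def GLModel.reflexiveFor (M : GLModel) (w : M.World) (S : Finset Formula) : Prop :=
  ∀ α : Formula, Formula.box α ∈ S → M.sat w ((Formula.box α).imp α)

/-- Saturation conditions (→L), (→R) for first-level sequents. -/
def Saturated1 (Γ Δ : Finset Formula) : Prop :=
  (∀ φ ψ : Formula, φ.imp ψ ∈ Γ → φ ∈ Δ ∨ ψ ∈ Γ) ∧
  (∀ φ ψ : Formula, φ.imp ψ ∈ Δ → φ ∈ Γ ∧ ψ ∈ Δ)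

/-- Saturation for second-level sequents: additionally (□L). -/
def Saturated2 (Γ Δ : Finset Formula) : Prop :=
  Saturated1 Γ Δ ∧ ∀ φ : Formula, Formula.box φ ∈ Γ → φ ∈ Γ

def Saturated : SeqLevel → Finset Formula → Finset Formula → Prop
  | .one => Saturated1
  | .two => Saturated2

/-- The Hilbert system GL. -/
inductive GLHilbert : Formula → Prop
  | ax1 (φ ψ : Formula) : GLHilbert (φ.imp (ψ.imp φ))
  | ax2 (φ ψ χ : Formula) :
      GLHilbert ((φ.imp (ψ.imp χ)).imp ((φ.imp ψ).imp (φ.imp χ)))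
  | ax3 (φ : Formula) : GLHilbert (((φ.imp .bot).imp .bot).imp φ)
  | axK (φ ψ : Formula) :
      GLHilbert ((Formula.box (φ.imp ψ)).imp ((Formula.box φ).imp (Formula.box ψ)))
  | axLob (φ : Formula) :
      GLHilbert ((Formula.box ((Formula.box φ).imp φ)).imp (Formula.box φ))
  | mp {φ ψ} : GLHilbert (φ.imp ψ) → GLHilbert φ → GLHilbert ψ
  | nec {φ} : GLHilbert φ → GLHilbert (Formula.box φ)

/-- The Hilbert system GLS: theorems of GL and all □α → α, closed under modus ponens. -/
inductive GLSHilbert : Formula → Prop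
  | gl {φ} : GLHilbert φ → GLSHilbert φ
  | refl (α : Formula) : GLSHilbert ((Formula.box α).imp α)
  | mp {φ ψ} : GLSHilbert (φ.imp ψ) → GLSHilbert φ → GLSHilbert ψ

/-- Conjunction (encoded with → and ⊥) of a list of formulas; empty conjunction is ⊤. -/
def Formula.conj : List Formula → Formula
  | [] => Formula.bot.imp Formula.bot
  | φ :: l => ((φ.imp ((Formula.conj l).imp .bot)).imp .bot)

/-- Membership predicate for the canonical model: saturated first-level sequents over S
that are not cut-free provable in GLS_seq. -/
def W0pred (S : Finset Formula) (s : Finset Formula × Finset Formula) : Prop :=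
  Saturated1 s.1 s.2 ∧ ¬ GLSSeq false SeqLevel.one s.1 s.2 ∧ s.1 ∪ s.2 ⊆ S

/-- Worlds of the canonical model. -/
def W0 (S : Finset Formula) : Type := {s : Finset Formula × Finset Formula // W0pred S s}

/-- Accessibility of the canonical model: (Γ⇒Δ) R₀ (Γ'⇒Δ') iff Γ_□ ⊊ Γ'_□ and Γ_□ ⊆ Γ'. -/
def R0 (S : Finset Formula) (s t : W0 S) : Prop :=
  boxInv s.1.1 ⊂ boxInv t.1.1 ∧ boxInv s.1.1 ⊆ t.1.1

/-- Valuation of the canonical model: p is true at (Γ⇒Δ) iff p ∈ Γ. -/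
def V0 (S : Finset Formula) (s : W0 S) (p : ℕ) : Prop := Formula.var p ∈ s.1.1

/-- The extended set of worlds W = W₀ ∪ ℕ. -/
def Wext (S : Finset Formula) : Type := W0 S ⊕ ℕ

/-- The extended accessibility relation, with distinguished world `wp` in W₀. -/
def Rext (S : Finset Formula) (wp : W0 S) : Wext S → Wext S → Prop
  | Sum.inl x, Sum.inl y => R0 S x y
  | Sum.inr _, Sum.inl y => y = wp ∨ R0 S wp y
  | Sum.inr n, Sum.inr m => m < n
  | Sum.inl _, Sum.inr _ => False

/-- The extended valuation: worlds in ℕ behave like the distinguished world `wp`. -/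
def Vext (S : Finset Formula) (wp : W0 S) : Wext S → ℕ → Prop
  | Sum.inl x, p => V0 S x p
  | Sum.inr _, p => V0 S wp p

section Hilbert

/-- Derivability from a base `B` of theorems and a set `s` of hypotheses. -/
inductive HDer (B : Formula → Prop) : Set Formula → Formula → Prop
  | ax {s φ} : B φ → HDer B s φ
  | hyp {s φ} : φ ∈ s → HDer B s φ
  | mp {s φ ψ} : HDer B s (φ.imp ψ) → HDer B s φ → HDer B s ψ

variable {B B' : Formula → Prop}

theorem HDer.weaken {s s' : Set Formula} {φ} (hs : s ⊆ s') (h : HDer B s φ) :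
    HDer B s' φ := by
  induction h with
  | ax h => exact .ax h
  | hyp h => exact .hyp (hs h)
  | mp _ _ ih1 ih2 => exact .mp ih1 ih2

theorem HDer.monoB {s : Set Formula} {φ} (hb : ∀ ψ, B ψ → B' ψ) (h : HDer B s φ) :
    HDer B' s φ := by
  induction h with
  | ax h => exact .ax (hb _ h)
  | hyp h => exact .hyp h
  | mp _ _ ih1 ih2 => exact .mp ih1 ih2

theorem GLHilbert.id (φ : Formula) : GLHilbert (φ.imp φ) :=
  .mp (.mp (.ax2 φ (φ.imp φ) φ) (.ax1 φ (φ.imp φ))) (.ax1 φ φ)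

variable (hax : ∀ ψ, GLHilbert ψ → B ψ)
include hax

theorem HDer.ded' {t : Set Formula} {χ : Formula} (h : HDer B t χ) :
    ∀ {s : Set Formula} {φ : Formula}, t ⊆ insert φ s → HDer B s (φ.imp χ) := by
  induction h with
  | ax h => exact fun _ => .mp (.ax (hax _ (.ax1 _ _))) (.ax h)
  | hyp h =>
    intro s φ hsub
    rcases hsub h with h | h
    · subst h; exact .ax (hax _ (GLHilbert.id _))
    · exact .mp (.ax (hax _ (.ax1 _ _))) (.hyp h)
  | mp _ _ ih1 ih2 =>
    intro s φ hsub
    exact .mp (.mp (.ax (hax _ (.ax2 _ _ _))) (ih1 hsub)) (ih2 hsub)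

/-- The deduction theorem. -/
theorem HDer.ded {s : Set Formula} {φ χ} (h : HDer B (insert φ s) χ) :
    HDer B s (φ.imp χ) := h.ded' hax subset_rfl

theorem HDer.dne {s : Set Formula} {φ} (h : HDer B s ((φ.imp .bot).imp .bot)) :
    HDer B s φ := .mp (.ax (hax _ (.ax3 φ))) h

theorem HDer.efq {s : Set Formula} {φ} (h : HDer B s .bot) : HDer B s φ :=
  HDer.dne hax (.mp (.ax (hax _ (.ax1 .bot (φ.imp .bot)))) h)

/-- Discharging a list of hypotheses. -/
theorem HDer.dedList {χ} : ∀ (L : List Formula) {s : Set Formula},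
    HDer B (s ∪ {x | x ∈ L}) χ → HDer B s (L.foldr .imp χ)
  | [], s, h => h.weaken (by simp)
  | a :: L, s, h => by
    refine HDer.ded hax (HDer.dedList L (h.weaken ?_))
    intro x hx
    simp only [Set.mem_union, Set.mem_setOf_eq, List.mem_cons, Set.mem_insert_iff] at hx ⊢
    tauto

omit hax

theorem HDer.toGL {φ} (h : HDer GLHilbert ∅ φ) : GLHilbert φ := by
  induction h with
  | ax h => exact h
  | hyp h => exact h.elim
  | mp _ _ ih1 ih2 => exact .mp ih1 ih2

theorem HDer.toGLS {φ} (h : HDer GLSHilbert ∅ φ) : GLSHilbert φ := by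
  induction h with
  | ax h => exact h
  | hyp h => exact h.elim
  | mp _ _ ih1 ih2 => exact .mp ih1 ih2

/-- K-distribution inside a context. -/
theorem HDer.boxmp {s : Set Formula} {φ ψ}
    (h1 : HDer GLHilbert s (Formula.box (φ.imp ψ))) (h2 : HDer GLHilbert s (Formula.box φ)) :
    HDer GLHilbert s (Formula.box ψ) :=
  .mp (.mp (.ax (.axK φ ψ)) h1) h2

theorem glax : ∀ ψ, GLHilbert ψ → GLHilbert ψ := fun _ h => h

/-- GL proves transitivity axiom 4. -/
theorem GLHilbert.four (a : Formula) :
    GLHilbert ((Formula.box a).imp (Formula.box (Formula.box a))) := by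
  -- β := (a → (□a → ⊥)) → ⊥  encodes  a ∧ □a
  -- h1 : ⊢ β → a
  have h1 : GLHilbert (((a.imp ((Formula.box a).imp .bot)).imp .bot).imp a) := by
    refine HDer.toGL (HDer.ded glax (HDer.dne glax (HDer.ded glax ?_)))
    refine HDer.mp (φ := a.imp ((Formula.box a).imp .bot)) (.hyp (by simp)) ?_
    refine HDer.ded glax (HDer.ded glax ?_)
    exact HDer.efq glax (.mp (φ := a) (.hyp (by simp)) (.hyp (by simp)))
  -- h2 : ⊢ β → □a
  have h2 : GLHilbert (((a.imp ((Formula.box a).imp .bot)).imp .bot).imp (Formula.box a)) := by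
    refine HDer.toGL (HDer.ded glax (HDer.dne glax (HDer.ded glax ?_)))
    refine HDer.mp (φ := a.imp ((Formula.box a).imp .bot)) (.hyp (by simp)) ?_
    refine HDer.ded glax ?_
    exact .hyp (by simp)
  -- h3 : ⊢ a → (□β → β)
  have h3 : GLHilbert (a.imp ((Formula.box ((a.imp ((Formula.box a).imp .bot)).imp .bot)).imp
      ((a.imp ((Formula.box a).imp .bot)).imp .bot))) := by
    refine HDer.toGL (HDer.ded glax (HDer.ded glax (HDer.ded glax ?_)))
    refine HDer.mp (φ := Formula.box a) ?_ ?_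
    · exact .mp (φ := a) (.hyp (by simp)) (.hyp (by simp))
    · exact HDer.boxmp (.ax (.nec h1)) (.hyp (by simp))
  refine HDer.toGL (HDer.ded glax ?_)
  refine HDer.boxmp (.ax (.nec h2)) ?_
  refine HDer.mp (.ax (.axLob _)) ?_
  exact HDer.boxmp (.ax (.nec h3)) (.hyp (by simp))

end Hilbert

section SeqSound

/-- Base theorems per level. -/
def Base : SeqLevel → Formula → Prop
  | .one => GLHilbert
  | .two => GLSHilbert

theorem baseax : ∀ (lv : SeqLevel) (ψ : Formula), GLHilbert ψ → Base lv ψ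
  | .one, _, h => h
  | .two, _, h => .gl h

/-- The Hilbert context of a sequent: Γ together with negations of Δ. -/
def Ctx (Γ Δ : Finset Formula) : Set Formula :=
  {x | x ∈ Γ ∨ ∃ d ∈ Δ, x = d.imp .bot}

@[simp] theorem mem_Ctx {x : Formula} {Γ Δ} :
    x ∈ Ctx Γ Δ ↔ x ∈ Γ ∨ ∃ d ∈ Δ, x = d.imp .bot := Iff.rfl

theorem Ctx_insert_left (φ : Formula) (Γ Δ) :
    Ctx (insert φ Γ) Δ = insert φ (Ctx Γ Δ) := by
  ext x; simp [Ctx]; tauto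

theorem Ctx_insert_right (φ : Formula) (Γ Δ) :
    Ctx Γ (insert φ Δ) = insert (φ.imp .bot) (Ctx Γ Δ) := by
  ext x; simp [Ctx]
  constructor
  · rintro (h | ⟨d, (rfl | hd), rfl⟩) <;> tauto
  · rintro (rfl | h | ⟨d, hd, rfl⟩) <;> tauto

theorem Ctx_mono {Γ Δ Γ' Δ' : Finset Formula} (h1 : Γ ⊆ Γ') (h2 : Δ ⊆ Δ') :
    Ctx Γ Δ ⊆ Ctx Γ' Δ' := by
  rintro x (hx | ⟨d, hd, rfl⟩)
  · exact Or.inl (h1 hx)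
  · exact Or.inr ⟨d, h2 hd, rfl⟩

theorem HDer.boxFoldr {s : Set Formula} :
    ∀ (L : List Formula) {χ : Formula},
      HDer GLHilbert s (Formula.box (L.foldr .imp χ)) →
      (∀ x ∈ L, HDer GLHilbert s (Formula.box x)) → HDer GLHilbert s (Formula.box χ)
  | [], _, h, _ => h
  | a :: L, χ, h, hl =>
    HDer.boxFoldr L (HDer.boxmp h (hl a (by simp)))
      (fun x hx => hl x (by simp [hx]))

theorem seq_sound {c lv Γ Δ} (h : GLSSeq c lv Γ Δ) :
    HDer (Base lv) (Ctx Γ Δ) .bot := by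
  induction h with
  | init c lv φ =>
    exact .mp (.hyp (Or.inr ⟨φ, by simp, rfl⟩)) (.hyp (Or.inl (by simp)))
  | initBot c lv => exact .hyp (Or.inl (by simp))
  | @cut lv Γ Δ φ _ _ ih1 ih2 =>
    rw [Ctx_insert_right] at ih1
    rw [Ctx_insert_left] at ih2
    exact .mp (HDer.ded (baseax lv) ih1) (HDer.ded (baseax lv) ih2)
  | @weak c lv Γ Δ Γ' Δ' h1 h2 _ ih => exact ih.weaken (Ctx_mono h1 h2)
  | @impL c lv Γ Δ φ ψ _ _ ih1 ih2 =>
    rw [Ctx_insert_right] at ih1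
    rw [Ctx_insert_left] at ih2
    rw [Ctx_insert_left]
    have hφ : HDer (Base lv) (insert (φ.imp ψ) (Ctx Γ Δ)) φ :=
      HDer.dne (baseax lv) ((HDer.ded (baseax lv) ih1).weaken (Set.subset_insert _ _))
    have hψ : HDer (Base lv) (insert (φ.imp ψ) (Ctx Γ Δ)) ψ :=
      .mp (.hyp (by simp)) hφ
    exact .mp ((HDer.ded (baseax lv) ih2).weaken (Set.subset_insert _ _)) hψ
  | @impR c lv Γ Δ φ ψ _ ih =>
    rw [Ctx_insert_left, Ctx_insert_right, Set.insert_comm] at ih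
    rw [Ctx_insert_right]
    have himp : HDer (Base lv) (Ctx Γ Δ) (φ.imp ψ) :=
      HDer.ded (baseax lv) (HDer.dne (baseax lv) (HDer.ded (baseax lv) ih))
    exact .mp (.hyp (by simp)) (himp.weaken (Set.subset_insert _ _))
  | @boxGL c Γ φ _ ih =>
    show HDer GLHilbert _ _
    have ih' : HDer GLHilbert (Ctx (Γ ∪ Γ.image .box ∪ {.box φ}) {φ}) .bot := ih
    set L : List Formula := Γ.toList ++ Γ.toList.map .box with hL
    have hctx : Ctx (Γ ∪ Γ.image .box ∪ {.box φ}) {φ} ⊆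
        insert (φ.imp .bot) (insert (Formula.box φ) {x | x ∈ L}) := by
      rintro x (hx | ⟨d, hd, rfl⟩)
      · simp only [Finset.mem_union, Finset.mem_image, Finset.mem_singleton] at hx
        rcases hx with (hx | ⟨γ, hγ, rfl⟩) | rfl
        · right; right; simp [hL, hx]
        · right; right; simp only [hL, Set.mem_setOf_eq, List.mem_append, List.mem_map]
          exact Or.inr ⟨γ, by simp [hγ], rfl⟩
        · right; left; rfl
      · simp only [Finset.mem_singleton] at hd
        subst hd; left; rfl
    have h3 : HDer GLHilbert (insert (Formula.box φ) {x | x ∈ L}) φ :=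
      HDer.dne glax (HDer.ded glax (ih'.weaken hctx))
    have h5 : HDer GLHilbert ∅ (L.foldr .imp ((Formula.box φ).imp φ)) :=
      HDer.dedList glax L ((HDer.ded glax h3).weaken (by simp))
    have hbox : ∀ x ∈ L, HDer GLHilbert (Ctx (Γ.image .box) {.box φ}) (Formula.box x) := by
      intro x hx
      simp only [hL, List.mem_append, List.mem_map, Finset.mem_toList] at hx
      rcases hx with hx | ⟨γ, hγ, rfl⟩
      · exact .hyp (Or.inl (Finset.mem_image_of_mem _ hx))
      · exact .mp (.ax (GLHilbert.four γ)) (.hyp (Or.inl (Finset.mem_image_of_mem _ hγ)))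
    have h7 : HDer GLHilbert (Ctx (Γ.image .box) {.box φ})
        (Formula.box ((Formula.box φ).imp φ)) :=
      HDer.boxFoldr L (.ax (.nec h5.toGL)) hbox
    have h8 : HDer GLHilbert (Ctx (Γ.image .box) {.box φ}) (Formula.box φ) :=
      .mp (.ax (.axLob φ)) h7
    exact .mp (.hyp (Or.inr ⟨Formula.box φ, by simp, rfl⟩)) h8
  | @boxL c Γ Δ φ _ ih =>
    rw [Ctx_insert_left] at ih
    rw [Ctx_insert_left]
    have hφ : HDer (Base .two) (insert (Formula.box φ) (Ctx Γ Δ)) φ :=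
      .mp (.ax (show Base .two _ from GLSHilbert.refl φ)) (.hyp (by simp))
    exact .mp ((HDer.ded (baseax _) ih).weaken (Set.subset_insert _ _)) hφ
  | @lift c Γ Δ _ ih => exact ih.monoB (fun ψ h => .gl h)

/-- If the end sequent is provable, φ is a GLS theorem. -/
theorem seq_to_hilbert {c : Bool} {φ : Formula}
    (h : GLSSeq c .two ∅ {φ}) : GLSHilbert φ := by
  have h1 := seq_sound h
  rw [show ({φ} : Finset Formula) = insert φ ∅ from rfl, Ctx_insert_right] at h1
  have h2 : HDer GLSHilbert ∅ ((φ.imp .bot).imp .bot) := by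
    refine HDer.ded (baseax .two) (h1.weaken ?_)
    intro x hx
    simp only [Set.mem_insert_iff, mem_Ctx] at hx ⊢
    rcases hx with h | h | ⟨d, hd, _⟩ <;> simp_all
  exact (HDer.dne (baseax .two) h2).toGLS

end SeqSound

section Soundness

theorem gl_sound {φ : Formula} (h : GLHilbert φ) (M : GLModel) (w : M.World) :
    M.sat w φ := by
  induction h generalizing w with
  | ax1 φ ψ => intro h1 _; exact h1
  | ax2 φ ψ χ => intro h1 h2 h3; exact h1 h3 (h2 h3)
  | ax3 φ =>
    intro h1
    by_contra h2
    exact h1 fun h3 => h2 h3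
  | axK φ ψ => intro h1 h2 w' hw'; exact h1 w' hw' (h2 w' hw')
  | axLob φ =>
    intro h1
    by_contra h2
    -- worlds accessible from w where φ fails
    have step : ∀ u : {u : M.World // M.R w u ∧ ¬ M.sat u φ},
        ∃ u' : {u : M.World // M.R w u ∧ ¬ M.sat u φ}, M.R u.1 u'.1 := by
      rintro ⟨u, hwu, hu⟩
      have h3 : ¬ M.sat u (Formula.box φ) := fun h4 => hu (h1 u hwu h4)
      simp only [GLModel.sat, KSat, not_forall] at h3
      obtain ⟨u', hu', hfail⟩ := h3
      exact ⟨⟨u', M.trans hwu hu', hfail⟩, hu'⟩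
    simp only [GLModel.sat, KSat, not_forall] at h2
    obtain ⟨u0, hu0, hfail0⟩ := h2
    classical
    let g : {u : M.World // M.R w u ∧ ¬ M.sat u φ} →
        {u : M.World // M.R w u ∧ ¬ M.sat u φ} := fun u => (step u).choose
    have hg : ∀ u, M.R u.1 (g u).1 := fun u => (step u).choose_spec
    let f : ℕ → {u : M.World // M.R w u ∧ ¬ M.sat u φ} := fun n => g^[n] ⟨u0, hu0, hfail0⟩
    refine M.cwf (fun n => (f n).1) fun i => ?_
    show M.R (f i).1 (f (i + 1)).1
    have : f (i + 1) = g (f i) := Function.iterate_succ_apply' g i _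
    rw [this]
    exact hg (f i)
  | mp _ _ ih1 ih2 => exact ih1 w (ih2 w)
  | nec _ ih => intro w' _; exact ih w'

/-- Along an infinitely descending chain, later worlds see earlier ones. -/
theorem chain_R {M : GLModel} {f : ℕ → M.World} (hf : ∀ i, M.R (f (i + 1)) (f i))
    {i j : ℕ} (hij : i < j) : M.R (f j) (f i) := by
  induction j, hij using Nat.le_induction with
  | base => exact hf i
  | succ j hj ih => exact M.trans (hf j) ih

theorem gls_fail_finite {φ : Formula} (h : GLSHilbert φ) (M : GLModel) (f : ℕ → M.World)
    (hf : ∀ i, M.R (f (i + 1)) (f i)) : {i : ℕ | ¬ M.sat (f i) φ}.Finite := by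
  induction h with
  | gl h =>
    convert Set.finite_empty using 1
    ext i; simp [gl_sound h M (f i)]
  | refl α =>
    refine Set.Subsingleton.finite ?_
    intro i hi j hj
    simp only [Set.mem_setOf_eq, GLModel.sat, KSat, not_forall] at hi hj
    by_contra hij
    obtain ⟨hbox, hα⟩ := hi
    obtain ⟨hbox', hα'⟩ := hj
    rcases Nat.lt_or_ge i j with h | h
    · exact hα (hbox' (f i) (chain_R hf h))
    · have h' : j < i := by omega
      exact hα' (hbox (f j) (chain_R hf h'))
  | mp _ _ ih1 ih2 =>
    refine Set.Finite.subset (ih1.union ih2) ?_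
    intro i hi
    simp only [Set.mem_setOf_eq, Set.mem_union] at hi ⊢
    by_contra hc
    push_neg at hc
    exact hi (hc.1 hc.2)

theorem gls_forward {φ : Formula} (h : GLSHilbert φ) (M : GLModel) (f : ℕ → M.World)
    (hf : ∀ i, M.R (f (i + 1)) (f i)) : ∃ i, M.sat (f i) φ := by
  obtain ⟨i, hi⟩ := ((gls_fail_finite h M f hf).infinite_compl).nonempty
  exact ⟨i, not_not.mp hi⟩

end Soundness

section Saturation

theorem Formula.mem_subf_self : ∀ φ : Formula, φ ∈ φ.subf
  | .var p => by simp [Formula.subf]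
  | .bot => by simp [Formula.subf]
  | .imp φ ψ => by simp [Formula.subf]
  | .box φ => by simp [Formula.subf]

theorem Formula.subf_trans : ∀ {θ ψ : Formula}, ψ ∈ θ.subf → ψ.subf ⊆ θ.subf
  | .var p, ψ, h => by
    simp [Formula.subf] at h; subst h; simp [Formula.subf]
  | .bot, ψ, h => by
    simp [Formula.subf] at h; subst h; simp [Formula.subf]
  | .imp a b, ψ, h => by
    simp only [Formula.subf, Finset.mem_insert, Finset.mem_union] at h
    rcases h with rfl | h | h
    · exact subset_rfl
    · exact (Formula.subf_trans h).trans
        ((Finset.subset_union_left).trans (Finset.subset_insert _ _))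
    · exact (Formula.subf_trans h).trans
        ((Finset.subset_union_right).trans (Finset.subset_insert _ _))
  | .box a, ψ, h => by
    simp only [Formula.subf, Finset.mem_insert] at h
    rcases h with rfl | h
    · exact subset_rfl
    · exact (Formula.subf_trans h).trans (Finset.subset_insert _ _)

theorem SF_closed {Ψ Φ : Finset Formula} {θ : Formula} (h : θ ∈ SF Ψ Φ) :
    θ.subf ⊆ SF Ψ Φ := by
  rw [SF, Finset.mem_biUnion] at h
  obtain ⟨x, hx, hθ⟩ := h
  intro ψ hψ
  rw [SF, Finset.mem_biUnion]
  exact ⟨x, hx, Formula.subf_trans hθ hψ⟩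

@[simp] theorem mem_boxInv {ψ : Formula} {Θ : Finset Formula} :
    ψ ∈ boxInv Θ ↔ Formula.box ψ ∈ Θ := by
  constructor
  · rw [boxInv]
    intro h
    simp only [Finset.mem_image, Finset.mem_filter] at h
    obtain ⟨x, ⟨hx, hbox⟩, rfl⟩ := h
    cases x <;> simp_all [Formula.isBox, Formula.unbox]
  · intro h
    rw [boxInv]
    simp only [Finset.mem_image, Finset.mem_filter]
    exact ⟨Formula.box ψ, ⟨h, rfl⟩, rfl⟩

theorem boxInv_image_subset {Θ : Finset Formula} : (boxInv Θ).image Formula.box ⊆ Θ := by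
  intro x hx
  simp only [Finset.mem_image, mem_boxInv] at hx
  obtain ⟨ψ, h, rfl⟩ := hx
  exact h

/-- A sequent with a common formula is provable. -/
theorem prov_of_common {lv : SeqLevel} {Γ Δ : Finset Formula} {θ : Formula}
    (h1 : θ ∈ Γ) (h2 : θ ∈ Δ) : GLSSeq false lv Γ Δ :=
  .weak (Finset.singleton_subset_iff.mpr h1) (Finset.singleton_subset_iff.mpr h2)
    (.init false lv θ)

theorem prov_of_bot {lv : SeqLevel} {Γ Δ : Finset Formula}
    (h1 : Formula.bot ∈ Γ) : GLSSeq false lv Γ Δ :=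
  .weak (Finset.singleton_subset_iff.mpr h1) (Finset.empty_subset _)
    (.initBot false lv)

/-- Saturation lemma: any unprovable sequent inside S extends to a saturated
unprovable sequent inside S. -/
theorem saturate {S Γ0 Δ0 : Finset Formula} (lv : SeqLevel)
    (hS : Γ0 ∪ Δ0 ⊆ S) (hSclosed : ∀ θ ∈ S, Formula.subf θ ⊆ S)
    (hnp : ¬ GLSSeq false lv Γ0 Δ0) :
    ∃ Γ Δ : Finset Formula, Γ0 ⊆ Γ ∧ Δ0 ⊆ Δ ∧ Γ ∪ Δ ⊆ S ∧
      Saturated lv Γ Δ ∧ ¬ GLSSeq false lv Γ Δ := by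
  classical
  set T : Set (Finset Formula × Finset Formula) :=
    {p | Γ0 ⊆ p.1 ∧ Δ0 ⊆ p.2 ∧ p.1 ∪ p.2 ⊆ S ∧ ¬ GLSSeq false lv p.1 p.2} with hT
  have hTfin : T.Finite := by
    refine Set.Finite.subset (Set.finite_Icc (⊥ : Finset Formula × Finset Formula) (S, S)) ?_
    rintro ⟨Γ, Δ⟩ ⟨_, _, hsub, _⟩
    constructor
    · exact ⟨Finset.empty_subset _, Finset.empty_subset _⟩
    · exact ⟨(Finset.subset_union_left).trans hsub, (Finset.subset_union_right).trans hsub⟩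
  have hTne : T.Nonempty := ⟨(Γ0, Δ0), subset_rfl, subset_rfl, hS, hnp⟩
  obtain ⟨⟨Γ, Δ⟩, hmem, hmax⟩ :=
    hTfin.exists_maximalFor (fun p => p.1.card + p.2.card) T hTne
  obtain ⟨hΓ0, hΔ0, hsubS, hnprov⟩ := hmem
  -- any strict extension inside S is provable
  have keyL : ∀ θ ∈ S, θ ∉ Γ → GLSSeq false lv (insert θ Γ) Δ := by
    intro θ hθS hθΓ
    by_contra hc
    have hmem' : (insert θ Γ, Δ) ∈ T := by
      refine ⟨hΓ0.trans (Finset.subset_insert _ _), hΔ0, ?_, hc⟩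
      intro x hx
      rcases Finset.mem_union.mp hx with hx | hx
      · rcases Finset.mem_insert.mp hx with rfl | hx
        · exact hθS
        · exact hsubS (Finset.mem_union_left _ hx)
      · exact hsubS (Finset.mem_union_right _ hx)
    have := hmax hmem' (by
      simp only
      have : Γ.card < (insert θ Γ).card := Finset.card_lt_card (Finset.ssubset_insert hθΓ)
      omega)
    simp only [Finset.card_insert_of_notMem hθΓ] at this
    omega
  have keyR : ∀ θ ∈ S, θ ∉ Δ → GLSSeq false lv Γ (insert θ Δ) := by
    intro θ hθS hθΔ
    by_contra hc
    have hmem' : (Γ, insert θ Δ) ∈ T := by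
      refine ⟨hΓ0, hΔ0.trans (Finset.subset_insert _ _), ?_, hc⟩
      intro x hx
      rcases Finset.mem_union.mp hx with hx | hx
      · exact hsubS (Finset.mem_union_left _ hx)
      · rcases Finset.mem_insert.mp hx with rfl | hx
        · exact hθS
        · exact hsubS (Finset.mem_union_right _ hx)
    have := hmax hmem' (by
      simp only
      have : Δ.card < (insert θ Δ).card := Finset.card_lt_card (Finset.ssubset_insert hθΔ)
      omega)
    simp only [Finset.card_insert_of_notMem hθΔ] at this
    omega
  have hΓS : Γ ⊆ S := (Finset.subset_union_left).trans hsubS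
  have hΔS : Δ ⊆ S := (Finset.subset_union_right).trans hsubS
  have hsat1 : Saturated1 Γ Δ := by
    constructor
    · intro φ ψ himp
      by_contra hc
      push_neg at hc
      obtain ⟨hφ, hψ⟩ := hc
      have hφS : φ ∈ S := hSclosed _ (hΓS himp) (by
        simp [Formula.subf, Finset.mem_insert, Formula.mem_subf_self])
      have hψS : ψ ∈ S := hSclosed _ (hΓS himp) (by
        simp [Formula.subf, Finset.mem_insert, Formula.mem_subf_self])
      have p1 := keyR φ hφS hφ
      have p2 := keyL ψ hψS hψ
      have : GLSSeq false lv (insert (φ.imp ψ) Γ) Δ := .impL p1 p2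
      rw [Finset.insert_eq_self.mpr himp] at this
      exact hnprov this
    · intro φ ψ himp
      by_contra hc
      push_neg at hc
      have hφS : φ ∈ S := hSclosed _ (hΔS himp) (by
        simp [Formula.subf, Finset.mem_insert, Formula.mem_subf_self])
      have hψS : ψ ∈ S := hSclosed _ (hΔS himp) (by
        simp [Formula.subf, Finset.mem_insert, Formula.mem_subf_self])
      have hprem : GLSSeq false lv (insert φ Γ) (insert ψ Δ) := by
        by_cases hφ : φ ∈ Γ
        · rw [Finset.insert_eq_self.mpr hφ]
          refine keyR ψ hψS ?_
          intro hψ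
          exact (hc hφ) hψ
        · exact .weak subset_rfl (Finset.subset_insert _ _) (keyL φ hφS hφ)
      have : GLSSeq false lv Γ (insert (φ.imp ψ) Δ) := .impR hprem
      rw [Finset.insert_eq_self.mpr himp] at this
      exact hnprov this
  refine ⟨Γ, Δ, hΓ0, hΔ0, hsubS, ?_, hnprov⟩
  cases lv with
  | one => exact hsat1
  | two =>
    refine ⟨hsat1, ?_⟩
    intro φ hbox
    by_contra hφ
    have hφS : φ ∈ S := hSclosed _ (hΓS hbox) (by
      simp [Formula.subf, Finset.mem_insert, Formula.mem_subf_self])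
    have := GLSSeq.boxL φ (keyL φ hφS hφ)
    rw [Finset.insert_eq_self.mpr hbox] at this
    exact hnprov this

end Saturation

section Model

variable {S : Finset Formula}

theorem R0_trans : Transitive (R0 S) := by
  rintro x y z ⟨h1, _⟩ ⟨h3, h4⟩
  exact ⟨h1.trans h3, h1.subset.trans h4⟩

theorem boxInv_bounded (x : W0 S) : (boxInv x.1.1).card ≤ (S.image Formula.unbox).card := by
  refine Finset.card_le_card ?_
  rw [boxInv]
  refine Finset.image_subset_image ?_
  exact (Finset.filter_subset _ _).trans ((Finset.subset_union_left).trans x.2.2.2)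

theorem R0_noChain (h : ℕ → W0 S) : ¬ ∀ i, R0 S (h i) (h (i + 1)) := by
  intro hh
  have hmono : StrictMono (fun i => (boxInv (h i).1.1).card) :=
    strictMono_nat_of_lt_succ fun i => Finset.card_lt_card (hh i).1
  have h1 : (S.image Formula.unbox).card + 1 ≤
      (boxInv (h ((S.image Formula.unbox).card + 1)).1.1).card := hmono.le_apply
  have h2 := boxInv_bounded (h ((S.image Formula.unbox).card + 1))
  omega

variable {wp : W0 S}

theorem Rext_trans : Transitive (Rext S wp) := by
  rintro (x | n) (y | m) (z | k) h1 h2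
  · exact R0_trans h1 h2
  · exact (h2 : False).elim
  · exact (h1 : False).elim
  · exact (h1 : False).elim
  · show z = wp ∨ R0 S wp z
    rcases (h1 : y = wp ∨ R0 S wp y) with rfl | hR
    · exact Or.inr h2
    · exact Or.inr (R0_trans hR h2)
  · exact (h2 : False).elim
  · exact h2
  · exact lt_trans h2 h1

theorem Rext_cwf : ∀ f : ℕ → Wext S, ¬ ∀ i, Rext S wp (f i) (f (i + 1)) := by
  intro f hf
  by_cases hinl : ∃ i x, f i = (Sum.inl x : Wext S)
  · obtain ⟨i0, x0, hx0⟩ := hinl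
    have key : ∀ k, ∃ x, f (i0 + k) = Sum.inl x := by
      intro k
      induction k with
      | zero => exact ⟨x0, hx0⟩
      | succ k ih =>
        obtain ⟨x, hx⟩ := ih
        have h1 := hf (i0 + k)
        rw [hx] at h1
        rcases hw : f (i0 + k + 1) with y | n
        · exact ⟨y, rfl⟩
        · rw [hw] at h1
          exact h1.elim
    choose g hg using key
    refine R0_noChain g fun k => ?_
    have h1 := hf (i0 + k)
    rw [hg k, show i0 + k + 1 = i0 + (k + 1) from rfl, hg (k + 1)] at h1
    exact h1
  · have key : ∀ i, ∃ n, f i = Sum.inr n := by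
      intro i
      rcases hw : f i with x | n
      · exact absurd ⟨i, x, hw⟩ hinl
      · exact ⟨n, rfl⟩
    choose g hg using key
    have hdec : ∀ i, g (i + 1) < g i := by
      intro i
      have h1 := hf i
      rw [hg i, hg (i + 1)] at h1
      exact h1
    have hle : ∀ i, g i + i ≤ g 0 := by
      intro i
      induction i with
      | zero => omega
      | succ i ih => have := hdec i; omega
    have := hle (g 0 + 1)
    omega

/-- The truth lemma for worlds of the canonical model. -/
theorem truth0 (hSclosed : ∀ θ ∈ S, Formula.subf θ ⊆ S) :
    ∀ (ψ : Formula) (x : W0 S),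
      (ψ ∈ x.1.1 → KSat (Rext S wp) (Vext S wp) ψ (Sum.inl x)) ∧
      (ψ ∈ x.1.2 → ¬ KSat (Rext S wp) (Vext S wp) ψ (Sum.inl x)) := by
  intro ψ
  induction ψ with
  | var p =>
    intro x
    refine ⟨fun h => h, fun h hsat => ?_⟩
    exact x.2.2.1 (prov_of_common (hsat : Formula.var p ∈ x.1.1) h)
  | bot =>
    intro x
    exact ⟨fun h => (x.2.2.1 (prov_of_bot h)).elim, fun _ h => h⟩
  | imp a b iha ihb =>
    intro x
    constructor
    · intro h hsa
      rcases x.2.1.1 a b h with ha | hb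
      · exact ((iha x).2 ha hsa).elim
      · exact (ihb x).1 hb
    · intro h hsat
      obtain ⟨ha, hb⟩ := x.2.1.2 a b h
      exact (ihb x).2 hb (hsat ((iha x).1 ha))
  | box a iha =>
    intro x
    constructor
    · intro h w' hw'
      rcases w' with y | n
      · exact (iha y).1 ((hw' : R0 S x y).2 (mem_boxInv.mpr h))
      · exact (hw' : False).elim
    · intro h hsat
      -- build a successor world refuting a
      have hnp : ¬ GLSSeq false SeqLevel.one
          (boxInv x.1.1 ∪ (boxInv x.1.1).image Formula.box ∪ {Formula.box a}) {a} := by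
        intro hp
        exact x.2.2.1 (.weak boxInv_image_subset (Finset.singleton_subset_iff.mpr h)
          (.boxGL hp))
      have hsub : (boxInv x.1.1 ∪ (boxInv x.1.1).image Formula.box ∪ {Formula.box a}) ∪ {a}
          ⊆ S := by
        intro θ hθ
        have hboxa : Formula.box a ∈ S := (Finset.subset_union_right).trans x.2.2.2 h
        simp only [Finset.mem_union, Finset.mem_singleton, Finset.mem_image,
          mem_boxInv] at hθ
        rcases hθ with ((hθ | ⟨γ, hγ, rfl⟩) | rfl) | rfl
        · refine hSclosed _ ((Finset.subset_union_left).trans x.2.2.2 hθ) ?_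
          simp [Formula.subf, Formula.mem_subf_self]
        · exact (Finset.subset_union_left).trans x.2.2.2 hγ
        · exact hboxa
        · exact hSclosed _ hboxa (by simp [Formula.subf, Formula.mem_subf_self])
      obtain ⟨Γt, Δt, hΓt, hΔt, htS, hsatt, hnpt⟩ := saturate SeqLevel.one hsub hSclosed hnp
      set t : W0 S := ⟨(Γt, Δt), hsatt, hnpt, htS⟩ with ht
      have hBsub : boxInv x.1.1 ⊆ Γt :=
        ((Finset.subset_union_left).trans Finset.subset_union_left).trans hΓt
      have hboxat : Formula.box a ∈ Γt :=
        hΓt (Finset.mem_union_right _ (Finset.mem_singleton_self _))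
      have hR : R0 S x t := by
        refine ⟨⟨?_, ?_⟩, hBsub⟩
        · intro θ hθ
          rw [mem_boxInv] at hθ ⊢
          exact hΓt (Finset.mem_union_left _ (Finset.mem_union_right _
            (Finset.mem_image_of_mem _ (mem_boxInv.mpr hθ))))
        · intro hcon
          have ha : a ∈ boxInv x.1.1 := hcon (mem_boxInv.mpr hboxat)
          exact x.2.2.1 (prov_of_common (mem_boxInv.mp ha) h)
      have hat : a ∈ Δt := hΔt (Finset.mem_singleton_self _)
      exact (iha t).2 hat (hsat (Sum.inl t) hR)

/-- The truth lemma for the copies of the distinguished world. -/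
theorem truthInr (hSclosed : ∀ θ ∈ S, Formula.subf θ ⊆ S)
    (hsat2 : ∀ α : Formula, Formula.box α ∈ wp.1.1 → α ∈ wp.1.1) :
    ∀ (ψ : Formula) (n : ℕ),
      (ψ ∈ wp.1.1 → KSat (Rext S wp) (Vext S wp) ψ (Sum.inr n)) ∧
      (ψ ∈ wp.1.2 → ¬ KSat (Rext S wp) (Vext S wp) ψ (Sum.inr n)) := by
  intro ψ
  induction ψ with
  | var p =>
    intro n
    refine ⟨fun h => h, fun h hsat => ?_⟩
    exact wp.2.2.1 (prov_of_common (hsat : Formula.var p ∈ wp.1.1) h)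
  | bot =>
    intro n
    exact ⟨fun h => (wp.2.2.1 (prov_of_bot h)).elim, fun _ h => h⟩
  | imp a b iha ihb =>
    intro n
    constructor
    · intro h hsa
      rcases wp.2.1.1 a b h with ha | hb
      · exact ((iha n).2 ha hsa).elim
      · exact (ihb n).1 hb
    · intro h hsat
      obtain ⟨ha, hb⟩ := wp.2.1.2 a b h
      exact (ihb n).2 hb (hsat ((iha n).1 ha))
  | box a iha =>
    intro n
    constructor
    · intro h w' hw'
      rcases w' with y | m
      · rcases (hw' : y = wp ∨ R0 S wp y) with rfl | hR
        · exact (truth0 hSclosed a y).1 (hsat2 a h)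
        · exact (truth0 hSclosed a y).1 (hR.2 (mem_boxInv.mpr h))
      · exact (iha m).1 (hsat2 a h)
    · intro h hsat
      have hnb := (truth0 (wp := wp) hSclosed (Formula.box a) wp).2 h
      simp only [KSat, not_forall] at hnb
      obtain ⟨w', hw', hfail⟩ := hnb
      rcases w' with y | m
      · exact hfail (hsat (Sum.inl y) (Or.inr (hw' : R0 S wp y)))
      · exact (hw' : False).elim

end Model

/-- Characterization C4: φ is a theorem of GLS iff on every infinitely descending
sequence of every GL-model, φ is true somewhere. -/
theorem gls_characterization_c4 (φ : Formula) :
    GLSHilbert φ ↔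
      ∀ (M : GLModel) (f : ℕ → M.World), (∀ i, M.R (f (i + 1)) (f i)) →
        ∃ i, M.sat (f i) φ := by
  constructor
  · exact fun h M f hf => gls_forward h M f hf
  · intro H
    by_contra hφ
    have hnseq : ¬ GLSSeq false SeqLevel.two ∅ {φ} := fun h => hφ (seq_to_hilbert h)
    have hSclosed : ∀ θ ∈ SF ∅ {φ}, Formula.subf θ ⊆ SF ∅ {φ} := fun θ h => SF_closed h
    have hsub : (∅ : Finset Formula) ∪ {φ} ⊆ SF ∅ {φ} := by
      rw [Finset.empty_union, Finset.singleton_subset_iff, SF, Finset.mem_biUnion]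
      exact ⟨φ, by simp, Formula.mem_subf_self φ⟩
    obtain ⟨Γp, Δp, _, hΔp, hpS, hpsat, hpnp⟩ :=
      saturate SeqLevel.two hsub hSclosed hnseq
    have hpsat2 : Saturated2 Γp Δp := hpsat
    have hnp1 : ¬ GLSSeq false SeqLevel.one Γp Δp := fun h => hpnp (.lift h)
    let wp : W0 (SF ∅ {φ}) := ⟨(Γp, Δp), hpsat2.1, hnp1, hpS⟩
    let M : GLModel :=
      { World := Wext (SF ∅ {φ})
        ne := ⟨Sum.inr 0⟩
        R := Rext (SF ∅ {φ}) wp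
        trans := Rext_trans
        cwf := Rext_cwf
        val := Vext (SF ∅ {φ}) wp }
    obtain ⟨i, hi⟩ := H M (fun n => (Sum.inr n : Wext (SF ∅ {φ})))
      (fun i => Nat.lt_succ_self i)
    have hφΔ : φ ∈ Δp := hΔp (Finset.mem_singleton_self φ)
    exact (truthInr hSclosed hpsat2.2 φ i).2 hφΔ hi
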